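/- Membership via iterated partial derivatives: for every regular expression E over α and every word w : List α, one has w ∈ matches E if and only if there exists H ∈ ∂_w(E) with H nullable, where ∂ is the extension of the Antimirov partial derivative to words (∂_[](E) = {E}, ∂_{w · a}(E) = ⋃_{K ∈ ∂_w(E)} ∂ₐ(K)). -/

import Mathlib

open RegularExpression

open scoped Classical in
/-- The finite set of *derived terms* of a regular expression. -/
noncomputable def derivedTerms {α : Type*} :
    RegularExpression α → Finset (RegularExpression α)
  | zero => ∅
  | epsilon => ∅
  | char _ => {1}
  | plus P Q => derivedTerms P ∪ derivedTerms Q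
  | comp P Q => (derivedTerms P).image (fun K => K * Q) ∪ derivedTerms Q
  | RegularExpression.star P => (derivedTerms P).image (fun K => K * RegularExpression.star P)

/-- The *literal length* of a regular expression: the number of occurrences
of letters of the alphabet in it. -/
def litLength {α : Type*} : RegularExpression α → ℕ
  | zero => 0
  | epsilon => 0
  | char _ => 1
  | plus P Q => litLength P + litLength Q
  | comp P Q => litLength P + litLength Q
  | RegularExpression.star P => litLength P

open scoped Classical in
/-- The finite set of *Antimirov partial derivatives* of a regular expression
with respect to a letter `a`. -/
noncomputable def aderiv {α : Type*} (a : α) :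
    RegularExpression α → Finset (RegularExpression α)
  | zero => ∅
  | epsilon => ∅
  | char b => if b = a then {1} else ∅
  | plus P Q => aderiv a P ∪ aderiv a Q
  | comp P Q =>
      if [] ∈ P.matches' then (aderiv a P).image (fun K => K * Q) ∪ aderiv a Q
      else (aderiv a P).image (fun K => K * Q)
  | RegularExpression.star P => (aderiv a P).image (fun K => K * RegularExpression.star P)

open scoped Classical in
/-- Extension of the Antimirov partial derivative to words:
`∂_[](E) = {E}` and `∂_{w · a}(E) = ⋃_{K ∈ ∂_w(E)} ∂ₐ(K)`. -/
noncomputable def aderivWord {α : Type*} (E : RegularExpression α)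
    (w : List α) : Finset (RegularExpression α) :=
  w.foldl (fun s a => s.biUnion (fun K => aderiv a K)) {E}

open scoped Classical in
lemma cons_mem_iff_deriv {α : Type*} [DecidableEq α] (E : RegularExpression α)
    (a : α) (x : List α) : a :: x ∈ E.matches' ↔ x ∈ (E.deriv a).matches' := by
  rw [← rmatch_iff_matches', ← rmatch_iff_matches', rmatch]

open scoped Classical in
lemma deriv_iff_aderiv {α : Type*} [DecidableEq α] (E : RegularExpression α)
    (a : α) (x : List α) :
    x ∈ (E.deriv a).matches' ↔ ∃ K ∈ aderiv a E, x ∈ K.matches' := by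
  induction E generalizing x with
  | zero => simp [aderiv, RegularExpression.deriv]
  | epsilon => simp [aderiv, RegularExpression.deriv]
  | char b =>
    by_cases h : b = a <;> simp [aderiv, RegularExpression.deriv, h]
  | plus P Q ihP ihQ =>
    rw [show (P.plus Q).deriv a = P.deriv a + Q.deriv a from rfl]
    simp only [matches'_add, Language.mem_add, ihP, ihQ, aderiv, Finset.mem_union]
    constructor
    · rintro (⟨K, hK, hx⟩ | ⟨K, hK, hx⟩)
      exacts [⟨K, Or.inl hK, hx⟩, ⟨K, Or.inr hK, hx⟩]
    · rintro ⟨K, hK | hK, hx⟩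
      exacts [Or.inl ⟨K, hK, hx⟩, Or.inr ⟨K, hK, hx⟩]
  | comp P Q ihP ihQ =>
    have hme : P.matchEpsilon ↔ [] ∈ P.matches' := by
      rw [← rmatch_iff_matches', rmatch]
    rw [show (comp P Q).deriv a =
        if P.matchEpsilon then P.deriv a * Q + Q.deriv a else P.deriv a * Q from rfl]
    by_cases h : [] ∈ P.matches'
    · rw [if_pos (hme.mpr h)]
      simp only [matches'_add, matches'_mul, Language.mem_add, Language.mem_mul,
        ihP, ihQ, aderiv, if_pos h, Finset.mem_union, Finset.mem_image]
      constructor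
      · rintro (⟨u, ⟨K, hK, hu⟩, v, hv, rfl⟩ | ⟨K, hK, hx⟩)
        · exact ⟨K * Q, Or.inl ⟨K, hK, rfl⟩, u, hu, v, hv, rfl⟩
        · exact ⟨K, Or.inr hK, hx⟩
      · rintro ⟨H, ⟨K, hK, rfl⟩ | hK, hx⟩
        · rcases hx with ⟨u, hu, v, hv, rfl⟩
          exact Or.inl ⟨u, ⟨K, hK, hu⟩, v, hv, rfl⟩
        · exact Or.inr ⟨H, hK, hx⟩
    · rw [if_neg fun hc => h (hme.mp hc)]
      simp only [matches'_mul, Language.mem_mul, ihP, aderiv, if_neg h,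
        Finset.mem_image]
      constructor
      · rintro ⟨u, ⟨K, hK, hu⟩, v, hv, rfl⟩
        exact ⟨K * Q, ⟨K, hK, rfl⟩, u, hu, v, hv, rfl⟩
      · rintro ⟨H, ⟨K, hK, rfl⟩, u, hu, v, hv, rfl⟩
        exact ⟨u, ⟨K, hK, hu⟩, v, hv, rfl⟩
  | star P ihP =>
    rw [show (RegularExpression.star P).deriv a = P.deriv a * RegularExpression.star P from rfl]
    simp only [matches'_mul, matches'_star, Language.mem_mul, ihP, aderiv,
      Finset.mem_image]
    constructor
    · rintro ⟨u, ⟨K, hK, hu⟩, v, hv, rfl⟩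
      exact ⟨K * P.star, ⟨K, hK, rfl⟩, u, hu, v, by exact hv, rfl⟩
    · rintro ⟨H, ⟨K, hK, rfl⟩, u, hu, v, hv, rfl⟩
      exact ⟨u, ⟨K, hK, hu⟩, v, by exact hv, rfl⟩

open scoped Classical in
lemma cons_mem_iff_aderiv {α : Type*} [DecidableEq α] (E : RegularExpression α)
    (a : α) (x : List α) :
    a :: x ∈ E.matches' ↔ ∃ K ∈ aderiv a E, x ∈ K.matches' := by
  rw [cons_mem_iff_deriv, deriv_iff_aderiv]

open scoped Classical in
lemma foldl_biUnion {α : Type*} [DecidableEq α] (w : List α)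
    (s : Finset (RegularExpression α)) (g : RegularExpression α → Finset (RegularExpression α)) :
    w.foldl (fun s a => s.biUnion (fun K => aderiv a K)) (s.biUnion g) =
      s.biUnion (fun K => w.foldl (fun s a => s.biUnion (fun K => aderiv a K)) (g K)) := by
  induction w generalizing g with
  | nil => simp
  | cons a w ih =>
    simp only [List.foldl_cons]
    rw [Finset.biUnion_biUnion, ih]

open scoped Classical in
lemma aderivWord_cons {α : Type*} [DecidableEq α] (E : RegularExpression α)
    (a : α) (w : List α) :
    aderivWord E (a :: w) = (aderiv a E).biUnion (fun K => aderivWord K w) := by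
  unfold aderivWord
  simp only [List.foldl_cons, Finset.singleton_biUnion]
  rw [← Finset.biUnion_singleton_eq_self (s := aderiv a E), foldl_biUnion,
    Finset.biUnion_biUnion]
  simp

/-- Membership via iterated partial derivatives: `w ∈ matches E` iff some
`H ∈ ∂_w(E)` is nullable. -/
theorem matches_iff_exists_nullable_aderivWord {α : Type*} [DecidableEq α]
    (E : RegularExpression α) (w : List α) :
    w ∈ E.matches' ↔ ∃ H ∈ aderivWord E w, [] ∈ H.matches' := by
  induction w generalizing E with
  | nil => simp [aderivWord]
  | cons a w ih =>
    rw [cons_mem_iff_aderiv, aderivWord_cons]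
    simp only [ih, Finset.mem_biUnion]
    constructor
    · rintro ⟨K, hK, H, hH, hnull⟩
      exact ⟨H, ⟨K, hK, hH⟩, hnull⟩
    · rintro ⟨H, ⟨K, hK, hH⟩, hnull⟩
      exact ⟨K, hK, H, hH, hnull⟩
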